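/- Let 𝒢 be a groupoid, H a group regarded as a one-object groupoid with unique object ⋆, and F : 𝒢 → H a functor such that for every object G of 𝒢 and every h ∈ H there exists a morphism g in 𝒢 with domain G and F(g) = h. Let 𝒞 be a cocomplete category and X : 𝒢 → 𝒞 a functor. Then the value at the unique object ⋆ of the left Kan extension of X along F is isomorphic to the colimit of the restriction of X to the wide subgroupoid 𝒢^F of morphisms mapped by F to the neutral element of H. -/

import Mathlib

open CategoryTheory CategoryTheory.Limits

universe w v u v2 u2

/-- The wide subgroupoid `𝒢^F` of `𝒢`: same objects, morphisms those `g` with `F g = 1`. -/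
def WideSub {𝒢 : Type u} [Groupoid.{v} 𝒢] {H : Type w} [Group H]
    (F : 𝒢 ⥤ SingleObj H) : Type u := 𝒢

instance WideSub.category {𝒢 : Type u} [Groupoid.{v} 𝒢] {H : Type w} [Group H]
    (F : 𝒢 ⥤ SingleObj H) : Category (WideSub F) where
  Hom a b := {f : (show 𝒢 from a) ⟶ (show 𝒢 from b) // F.map f = (1 : H)}
  id a := ⟨𝟙 (show 𝒢 from a), by rw [F.map_id]; rfl⟩
  comp f g := ⟨f.1 ≫ g.1, by rw [F.map_comp, f.2, g.2]; simp [SingleObj.comp_as_mul]⟩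
  id_comp f := Subtype.ext (Category.id_comp f.1)
  comp_id f := Subtype.ext (Category.comp_id f.1)
  assoc f g h := Subtype.ext (Category.assoc f.1 g.1 h.1)

/-- The functor `Φ_F : 𝒢^F → F ↓ ⋆` sending `G` to `(G, 𝟙 ⋆)` and a morphism to itself. -/
def PhiF {𝒢 : Type u} [Groupoid.{v} 𝒢] {H : Type w} [Group H]
    (F : 𝒢 ⥤ SingleObj H) : WideSub F ⥤ CostructuredArrow F (SingleObj.star H) where
  obj a := CostructuredArrow.mk (𝟙 (F.obj (show 𝒢 from a)))
  map {a b} g := CostructuredArrow.homMk g.1 (by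
    simp only [CostructuredArrow.mk_hom_eq_self]
    rw [g.2]
    exact mul_one 1)

/-- The inclusion functor `𝒢^F ⥤ 𝒢`. -/
def WideSub.incl {𝒢 : Type u} [Groupoid.{v} 𝒢] {H : Type w} [Group H]
    (F : 𝒢 ⥤ SingleObj H) : WideSub F ⥤ 𝒢 where
  obj a := a
  map g := g.1

theorem map_left_eq {𝒢 : Type u} [Groupoid.{v} 𝒢] {H : Type w} [Group H]
    {F : 𝒢 ⥤ SingleObj H} {d : CostructuredArrow F (SingleObj.star H)}
    (f : StructuredArrow d (PhiF F)) : F.map f.hom.left = d.hom := by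
  have := f.hom.w
  exact (Category.comp_id (F.map f.hom.left)).symm.trans (this.trans (Category.comp_id d.hom))

theorem PhiF_final {𝒢 : Type u} [Groupoid.{v} 𝒢] {H : Type w} [Group H]
    (F : 𝒢 ⥤ SingleObj H)
    (hsurj : ∀ (G : 𝒢) (h : H), ∃ (K : 𝒢) (g : G ⟶ K), F.map g = h) :
    (PhiF F).Final := by
  constructor
  intro d
  obtain ⟨K, g, hg⟩ := hsurj d.left d.hom
  have u : StructuredArrow d (PhiF F) :=
    @StructuredArrow.mk (WideSub F) (WideSub.category F) _ _ d K (PhiF F)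
      (CostructuredArrow.homMk (f' := (PhiF F).obj (show WideSub F from K)) g (by
        show F.map g ≫ 𝟙 _ = d.hom
        rw [hg]
        exact one_mul _))
  have : Nonempty (StructuredArrow d (PhiF F)) := ⟨u⟩
  apply zigzag_isConnected
  intro f₁ f₂
  have h₁ := map_left_eq f₁
  have h₂ := map_left_eq f₂
  refine Zigzag.of_hom (StructuredArrow.homMk ?_ ?_)
  · refine (⟨Groupoid.inv f₁.hom.left ≫ f₂.hom.left, ?_⟩ : f₁.right ⟶ f₂.right)
    have key : ∀ {A B C : 𝒢} (a : A ⟶ B) (b : A ⟶ C), F.map a = F.map b →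
        F.map (Groupoid.inv a ≫ b) = 1 := by
      intro A B C a b hab
      rw [F.map_comp, Groupoid.inv_eq_inv, F.map_inv, SingleObj.inv_as_inv,
        SingleObj.comp_as_mul, hab]
      exact mul_inv_cancel _
    exact key _ _ (h₁.trans h₂.symm)
  · apply CostructuredArrow.hom_ext
    simp [PhiF]
    have key2 : ∀ {A B C : 𝒢} (a : A ⟶ B) (b : A ⟶ C), a ≫ Groupoid.inv a ≫ b = b := by
      intro A B C a b
      rw [← Category.assoc, Groupoid.comp_inv, Category.id_comp]
    exact key2 _ _

/-- under the hypothesis that every element of `H` is realized by a morphism out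
of every object, the value at `⋆` of any left Kan extension of `X : 𝒢 ⥤ 𝒞` along `F` is
isomorphic to the colimit of the restriction of `X` to the wide subgroupoid `𝒢^F`. -/
theorem stmt_4 {𝒢 : Type u} [Groupoid.{v} 𝒢] {H : Type w} [Group H]
    (F : 𝒢 ⥤ SingleObj H)
    (hsurj : ∀ (G : 𝒢) (h : H), ∃ (K : 𝒢) (g : G ⟶ K), F.map g = h)
    (𝒞 : Type u2) [Category.{v2} 𝒞] [HasColimitsOfSize.{v, u} 𝒞]
    (X : 𝒢 ⥤ 𝒞)
    (L : SingleObj H ⥤ 𝒞) (α : X ⟶ F ⋙ L) (hL : L.IsLeftKanExtension α) :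
    Nonempty (L.obj (SingleObj.star H) ≅ colimit (WideSub.incl F ⋙ X)) := by
  have hfin : (PhiF F).Final := PhiF_final F hsurj
  have h1 : HasColimit (PhiF F ⋙ (CostructuredArrow.proj F (SingleObj.star H) ⋙ X)) := by
    show HasColimit (WideSub.incl F ⋙ X)
    infer_instance
  have h2 : HasColimit (CostructuredArrow.proj F (SingleObj.star H) ⋙ X) :=
    Functor.Final.hasColimit_of_comp (PhiF F)
  haveI h3 : ∀ (Y : SingleObj H), HasColimit (CostructuredArrow.proj F Y ⋙ X) := fun _ => h2
  let P : ((Functor.LeftExtension.mk L α).IsPointwiseLeftKanExtensionAt (SingleObj.star H)) :=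
    Functor.isPointwiseLeftKanExtensionOfIsLeftKanExtension L α (SingleObj.star H)
  refine ⟨?_⟩
  calc L.obj (SingleObj.star H)
      ≅ colimit (CostructuredArrow.proj F (SingleObj.star H) ⋙ X) :=
        P.coconePointUniqueUpToIso (colimit.isColimit _)
    _ ≅ colimit (PhiF F ⋙ (CostructuredArrow.proj F (SingleObj.star H) ⋙ X)) :=
        (Functor.Final.colimitIso (PhiF F) _).symm
    _ ≅ colimit (WideSub.incl F ⋙ X) := HasColimit.isoOfNatIso (Iso.refl _)
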